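/- Fixpoint equivalence, backward direction: Let f be a Boolean network of dimension n and ⟨f⟩ its interval-semantics encoding. If z ∈ 𝔹^{2n} satisfies ⟨f⟩(z) = z, then z is consistent, i.e. α(γ(z)) = z, and γ(z) is a fixpoint of f, i.e. f(γ(z)) = γ(z). -/
import Mathlib


/-- Asynchronous transition relation of a Boolean network `f`:
`x → y` iff exactly one component `i` differs and `y i = f i x`. -/
def asyncStep {ι : Type} (f : ι → (ι → Bool) → Bool) (x y : ι → Bool) : Prop :=
  ∃ i : ι, x i ≠ y i ∧ (∀ j : ι, j ≠ i → x j = y j) ∧ y i = f i x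

/-- Index of the "write" node `2i-1` (0-indexed: `2i`). -/
def wIdx {n : ℕ} (i : Fin n) : Fin (2 * n) := ⟨2 * i.val, by have := i.isLt; omega⟩

/-- Index of the "read" node `2i` (0-indexed: `2i+1`). -/
def rIdx {n : ℕ} (i : Fin n) : Fin (2 * n) := ⟨2 * i.val + 1, by have := i.isLt; omega⟩

/-- `γ : 𝔹^{2n} → 𝔹^n`, projection on read nodes. -/
def gam {n : ℕ} (z : Fin (2 * n) → Bool) : Fin n → Bool := fun i => z (rIdx i)

/-- `α : 𝔹^n → 𝔹^{2n}`, consistent configuration. -/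
def alph {n : ℕ} (x : Fin n → Bool) : Fin (2 * n) → Bool :=
  fun k => x ⟨k.val / 2, by have := k.isLt; omega⟩

/-- Interval-semantics encoding `⟨f⟩` of a Boolean network `f`. -/
def encode {n : ℕ} (f : Fin n → (Fin n → Bool) → Bool) :
    Fin (2 * n) → (Fin (2 * n) → Bool) → Bool := fun k z =>
  let i : Fin n := ⟨k.val / 2, by have := k.isLt; omega⟩
  if k.val % 2 = 0 then
    (f i (gam z) && (!(z (rIdx i)) || z (wIdx i))) || (!(z (rIdx i)) && z (wIdx i))
  else
    z (wIdx i)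

/-- Positive edge `(j,i)` of the influence graph `G(f)`. -/
def posEdge {ι : Type} (f : ι → (ι → Bool) → Bool) (j i : ι) : Prop :=
  ∃ x y : ι → Bool, (∀ k : ι, k ≠ j → x k = y k) ∧ x j = false ∧ y j = true ∧
    f i x = false ∧ f i y = true

/-- Negative edge `(j,i)` of the influence graph `G(f)`. -/
def negEdge {ι : Type} (f : ι → (ι → Bool) → Bool) (j i : ι) : Prop :=
  ∃ x y : ι → Bool, (∀ k : ι, k ≠ j → x k = y k) ∧ x j = false ∧ y j = true ∧
    f i x = true ∧ f i y = false

/-- if `z` is a fixpoint of `⟨f⟩` then `z` is consistent and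
`γ(z)` is a fixpoint of `f`. -/
lemma encode_even {n : ℕ} (f : Fin n → (Fin n → Bool) → Bool) (z : Fin (2*n) → Bool) (i : Fin n) :
    encode f (wIdx i) z = ((f i (gam z) && (!(z (rIdx i)) || z (wIdx i))) || (!(z (rIdx i)) && z (wIdx i))) := by
  simp only [encode, wIdx, Nat.mul_mod_right, if_pos rfl,
    Nat.mul_div_cancel_left _ two_pos, Fin.eta, if_true]

lemma encode_odd {n : ℕ} (f : Fin n → (Fin n → Bool) → Bool) (z : Fin (2*n) → Bool) (i : Fin n) :
    encode f (rIdx i) z = z (wIdx i) := by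
  simp only [encode, rIdx, show ∀ m, (2*m+1) % 2 = 1 from fun m => by omega,
    show ∀ m, (2*m+1) / 2 = m from fun m => by omega, Fin.eta, if_neg (by omega : ¬ (1:ℕ) = 0)]

theorem fixpoint_backward {n : ℕ} (f : Fin n → (Fin n → Bool) → Bool)
    (z : Fin (2 * n) → Bool) (h : ∀ k : Fin (2 * n), encode f k z = z k) :
    alph (gam z) = z ∧ ∀ i : Fin n, f i (gam z) = gam z i := by
  have hwr : ∀ i : Fin n, z (wIdx i) = z (rIdx i) := fun i =>
    (encode_odd f z i).symm.trans (h (rIdx i))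
  have hfix : ∀ i : Fin n, f i (gam z) = gam z i := by
    intro i
    have hw := (encode_even f z i).symm.trans (h (wIdx i))
    rw [hwr i] at hw
    show f i (gam z) = z (rIdx i)
    rcases hb : z (rIdx i) with _ | _ <;> rw [hb] at hw <;> simpa using hw
  refine ⟨funext fun k => ?_, hfix⟩
  have hk := k.isLt
  rcases Nat.even_or_odd k.val with ⟨m, hm⟩ | ⟨m, hm⟩
  · have hkw : k = wIdx ⟨m, by omega⟩ := by ext; simp [wIdx]; omega
    rw [hkw, hwr ⟨m, by omega⟩]
    simp only [alph, gam, wIdx]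
    congr 1
    ext; simp only [rIdx, wIdx]; omega
  · have hkr : k = rIdx ⟨m, by omega⟩ := by ext; simp [rIdx]; omega
    rw [hkr]
    simp only [alph, gam]
    congr 1
    ext; simp [rIdx]; omega
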